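/- Let K be a field of characteristic zero and let A be a non-unital associative K-algebra. If for every non-unital associative K-algebra B there exists a universal pair for (A, B) (equivalently, if the functor A ⊗ − : ComAlg_K → Alg_K admits a left adjoint), then A is finite-dimensional over K. -/

import Mathlib

/-!
Statement 13: Let `K` be a field of characteristic zero and `A` a non-unital associative
`K`-algebra. If every non-unital associative `K`-algebra `B` admits a universal pair for
`(A, B)` (equivalently, if the functor `A ⊗ −` from commutative `K`-algebras to non-unital
associative `K`-algebras admits a left adjoint), then `A` is finite-dimensional over `K`.
-/

open TensorProduct

universe u

/-- `(C₀, η)` is a universal pair for `(A, B)`. -/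
def IsUniversalAlgPair (K : Type u) [Field K]
    (A : Type u) [NonUnitalRing A] [Module K A] [SMulCommClass K A A] [IsScalarTower K A A]
    (B : Type u) [NonUnitalRing B] [Module K B] [SMulCommClass K B B] [IsScalarTower K B B]
    (C₀ : Type u) [CommRing C₀] [Algebra K C₀]
    (η : B →ₙₐ[K] A ⊗[K] C₀) : Prop :=
  ∀ (C : Type u) [CommRing C] [Algebra K C], ∀ f : B →ₙₐ[K] A ⊗[K] C,
    ∃! Φ : C₀ →ₐ[K] C, ∀ x : B, f x = LinearMap.lTensor A Φ.toLinearMap (η x)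

/-- A universal pair for `(A, B)`. -/
structure UniversalAlgPair (K : Type u) [Field K]
    (A : Type u) [NonUnitalRing A] [Module K A] [SMulCommClass K A A] [IsScalarTower K A A]
    (B : Type u) [NonUnitalRing B] [Module K B] [SMulCommClass K B B] [IsScalarTower K B B] :
    Type (u + 1) where
  C₀ : Type u
  [commRingC₀ : CommRing C₀]
  [algebraC₀ : Algebra K C₀]
  η : B →ₙₐ[K] A ⊗[K] C₀
  universal : IsUniversalAlgPair K A B C₀ η

/-- The non-unital subalgebra of polynomials with zero constant term:
the free non-unital associative algebra on one generator. -/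
def zeroConstPoly (K : Type u) [Field K] : NonUnitalSubalgebra K (Polynomial K) where
  carrier := {p | p.coeff 0 = 0}
  add_mem' := by intro a b ha hb; simp_all [Set.mem_setOf_eq]
  zero_mem' := by simp [Set.mem_setOf_eq]
  mul_mem' := by
    intro a b ha hb
    simp only [Set.mem_setOf_eq] at *
    rw [Polynomial.mul_coeff_zero, ha, hb, mul_zero]
  smul_mem' := by intro c a ha; simp_all [Set.mem_setOf_eq]

lemma mem_zeroConstPoly {K : Type u} [Field K] {p : Polynomial K} :
    p ∈ zeroConstPoly K ↔ p.coeff 0 = 0 := Iff.rfl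

/-- `X` as an element of `zeroConstPoly K`. -/
noncomputable def zcX (K : Type u) [Field K] : zeroConstPoly K :=
  ⟨Polynomial.X, by simp [mem_zeroConstPoly]⟩

variable {K : Type u} [Field K]
  {M : Type u} [NonUnitalRing M] [Module K M] [SMulCommClass K M M] [IsScalarTower K M M]

lemma fst_aeval_zc (m : M) (p : zeroConstPoly K) :
    (Polynomial.aeval (Unitization.inr m : Unitization K M) (p : Polynomial K)).fst = 0 := by
  have h := Polynomial.aeval_algHom_apply (Unitization.fstHom K M)
    (Unitization.inr m : Unitization K M) (p : Polynomial K)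
  have h2 : (Unitization.fstHom K M) (Unitization.inr m : Unitization K M) = 0 :=
    Unitization.fst_inr K m
  rw [h2] at h
  have h3 : (Polynomial.aeval (0 : K)) (p : Polynomial K) = (p : Polynomial K).coeff 0 := by
    rw [Polynomial.aeval_def, Polynomial.eval₂_at_zero]; rfl
  have := p.2
  rw [mem_zeroConstPoly] at this
  simpa [h3, this] using h.symm

/-- Evaluation of a constant-term-zero polynomial at an element `m` of a non-unital
algebra, as a non-unital algebra homomorphism. -/
noncomputable def zcEval (m : M) : zeroConstPoly K →ₙₐ[K] M where
  toFun p := (Polynomial.aeval (Unitization.inr m : Unitization K M) (p : Polynomial K)).snd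
  map_add' p q := by
    push_cast
    rw [map_add, Unitization.snd_add]
  map_smul' c p := by
    push_cast
    rw [map_smul, Unitization.snd_smul]; rfl
  map_zero' := by simp
  map_mul' p q := by
    push_cast
    rw [map_mul, Unitization.snd_mul, fst_aeval_zc, fst_aeval_zc, zero_smul, zero_smul,
      zero_add, zero_add]

lemma zcEval_X (m : M) : zcEval m (zcX K) = m := by
  simp [zcEval, zcX, Unitization.snd_inr]

/-- If every non-unital associative `K`-algebra `B` admits a universal pair for `(A, B)`,
then `A` is finite-dimensional over `K`. -/
theorem finiteDimensional_of_forall_exists_universalAlgPair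
    (K : Type u) [Field K] [CharZero K]
    (A : Type u) [NonUnitalRing A] [Module K A] [SMulCommClass K A A] [IsScalarTower K A A]
    (huniv : ∀ (B : Type u) [NonUnitalRing B] [Module K B] [SMulCommClass K B B]
      [IsScalarTower K B B], Nonempty (UniversalAlgPair K A B)) :
    FiniteDimensional K A := by
  obtain ⟨P⟩ := huniv (zeroConstPoly K)
  letI : CommRing P.C₀ := P.commRingC₀
  letI : Algebra K P.C₀ := P.algebraC₀
  set ι := Module.Basis.ofVectorSpaceIndex K A with hι
  let e : Module.Basis ι K A := Module.Basis.ofVectorSpace K A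
  -- for each basis vector, a character hitting it
  have key : ∀ i : ι, ∃ Φ : P.C₀ →ₐ[K] K,
      LinearMap.lTensor A Φ.toLinearMap (P.η (zcX K)) = e i ⊗ₜ[K] (1 : K) := by
    intro i
    obtain ⟨Φ, hΦ, -⟩ := P.universal K (zcEval (e i ⊗ₜ[K] (1 : K)))
    refine ⟨Φ, ?_⟩
    rw [← hΦ (zcX K), zcEval_X]
  choose Φi hΦi using key
  let Φ : P.C₀ →ₐ[K] (ι → K) := Pi.algHom K (fun _ => K) Φi
  set t : A ⊗[K] (ι → K) := LinearMap.lTensor A Φ.toLinearMap (P.η (zcX K)) with ht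
  obtain ⟨S, hS⟩ := TensorProduct.exists_finset t
  set W : Submodule K A := Submodule.span K (Prod.fst '' (S : Set (A × (ι → K)))) with hW
  have hei : ∀ i : ι, e i ∈ W := by
    intro i
    have hproj : (Pi.evalAlgHom K (fun _ : ι => K) i).toLinearMap ∘ₗ Φ.toLinearMap
        = (Φi i).toLinearMap := by
      ext c; rfl
    have h1 : LinearMap.lTensor A (Pi.evalAlgHom K (fun _ : ι => K) i).toLinearMap t
        = e i ⊗ₜ[K] (1 : K) := by
      rw [ht, ← LinearMap.comp_apply, ← LinearMap.lTensor_comp, hproj, hΦi]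
    have h2 : LinearMap.lTensor A (Pi.evalAlgHom K (fun _ : ι => K) i).toLinearMap t
        = ∑ p ∈ S, p.1 ⊗ₜ[K] (p.2 i) := by
      rw [hS, map_sum]
      simp [LinearMap.lTensor_tmul]
    have h3 : e i = ∑ p ∈ S, (p.2 i) • p.1 := by
      have := h1.symm.trans h2
      have h4 := congrArg (TensorProduct.rid K A) this
      simpa [TensorProduct.rid_tmul, map_sum] using h4
    rw [h3]
    refine Submodule.sum_mem _ fun p hp => Submodule.smul_mem _ _ ?_
    exact Submodule.subset_span ⟨p, hp, rfl⟩
  have htop : (⊤ : Submodule K A) ≤ W := by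
    rw [← e.span_eq]
    refine Submodule.span_le.2 ?_
    rintro _ ⟨i, rfl⟩
    exact hei i
  have hWfg : W.FG := Submodule.fg_span ((S.finite_toSet.image Prod.fst))
  exact ⟨top_le_iff.mp htop ▸ hWfg⟩
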